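/- Every unrooted phylogenetic tree admits a leaf induced path partition: if T is a tree with at least two vertices, no vertex of degree 2, and leaf set L(T), then the vertex set of T can be partitioned into a collection of vertex-disjoint paths of T such that every single-vertex path of the collection is contained in L(T) and every other path intersects L(T) precisely in its two end vertices. -/

import Mathlib

/-!
Unrooted phylogenetic networks: simple, connected, undirected graphs with
nonempty leaf set and no degree-2 vertices, formalized via `SimpleGraph`.
-/

namespace Paper

variable {V : Type*}

/-- The leaf set of an undirected graph: its vertices of degree 1. -/
def leafSet (G : SimpleGraph V) : Set V := {v : V | (G.neighborSet v).ncard = 1}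

/-- `G` is an unrooted phylogenetic network: a simple, connected, undirected
graph with nonempty leaf set and no vertex of degree 2. -/
def IsUPN (G : SimpleGraph V) : Prop :=
  G.Connected ∧ (leafSet G).Nonempty ∧ ∀ v : V, (G.neighborSet v).ncard ≠ 2

/-- `G` is forest-based: it contains a spanning forest `F` (an acyclic spanning
subgraph) whose set of vertices of degree at most 1 is exactly `leafSet G`, and
such that every edge of `G` has its two ends in different connected components
of `F` (i.e. each tree of `F` is an induced subgraph of `G`). -/
def ForestBasedU (G : SimpleGraph V) : Prop :=
  ∃ F : SimpleGraph V, F ≤ G ∧ F.IsAcyclic ∧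
    {v : V | (F.neighborSet v).ncard ≤ 1} = leafSet G ∧
    ∀ u v : V, G.Adj u v → ¬ F.Adj u v → ¬ F.Reachable u v

/-- `G` is tree-based: it contains a spanning tree (a connected acyclic
spanning subgraph) whose set of degree-1 vertices is exactly `leafSet G`. -/
def TreeBasedU (G : SimpleGraph V) : Prop :=
  ∃ T : SimpleGraph V, T ≤ G ∧ T.Connected ∧ T.IsAcyclic ∧
    {v : V | (T.neighborSet v).ncard = 1} = leafSet G

/-- An (undirected) path in `G`: a nonempty list of pairwise distinct vertices,
consecutive ones joined by edges. -/
def UPath (G : SimpleGraph V) (p : List V) : Prop :=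
  p ≠ [] ∧ p.Nodup ∧ p.Chain' G.Adj

/-- An induced path in `G`: a path whose vertex set induces no edges other than
the consecutive edges of the path. -/
def UInducedPath (G : SimpleGraph V) (p : List V) : Prop :=
  UPath G p ∧ ∀ i j : Fin p.length, G.Adj (p.get i) (p.get j) →
    (j : ℕ) = (i : ℕ) + 1 ∨ (i : ℕ) = (j : ℕ) + 1

/-- The path `p` intersects the leaf set of `G` precisely in its two (distinct)
end vertices. -/
def MeetsLeavesExactlyAtEnds (G : SimpleGraph V) (p : List V) : Prop :=
  ∃ a b : V, p.head? = some a ∧ p.getLast? = some b ∧ a ≠ b ∧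
    a ∈ leafSet G ∧ b ∈ leafSet G ∧
    ∀ v ∈ p, v ∈ leafSet G → v = a ∨ v = b

/-! Auxiliary development -/

variable (T : SimpleGraph V)

def reachIn (S : Set V) (u v : V) : Prop :=
  Relation.ReflTransGen (fun a b => T.Adj a b ∧ a ∈ S ∧ b ∈ S) u v

lemma reachIn_refl {S : Set V} (u : V) : reachIn T S u u := Relation.ReflTransGen.refl

lemma reachIn_tail {S : Set V} {u v w : V} (h : reachIn T S u v)
    (hadj : T.Adj v w) (hv : v ∈ S) (hw : w ∈ S) : reachIn T S u w :=
  Relation.ReflTransGen.tail h ⟨hadj, hv, hw⟩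

lemma reachIn_mem {S : Set V} {u v : V} (h : reachIn T S u v) (hu : u ∈ S) : v ∈ S := by
  induction h with
  | refl => exact hu
  | tail _ h2 _ => exact h2.2.2

lemma reachIn_walk {S : Set V} {u v : V} (hu : u ∈ S) (h : reachIn T S u v) :
    ∃ w : T.Walk u v, ∀ x ∈ w.support, x ∈ S := by
  induction h with
  | refl => exact ⟨SimpleGraph.Walk.nil, by simp [hu]⟩
  | tail h1 h2 ih =>
    obtain ⟨w, hw⟩ := ih
    refine ⟨w.concat h2.1, ?_⟩
    intro x hx
    rw [SimpleGraph.Walk.support_concat] at hx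
    rcases List.mem_append.mp hx with hx | hx
    · exact hw x hx
    · rcases List.mem_singleton.mp hx with rfl; exact h2.2.2

/-- two children of `r` have disjoint components (acyclicity). -/
lemma comp_disjoint [DecidableEq V] (hacy : T.IsAcyclic) {S : Set V} {r c1 c2 x : V}
    (h1 : T.Adj r c1) (h2 : T.Adj r c2) (hne : c1 ≠ c2)
    (hc1 : c1 ∈ S \ {r}) (hc2 : c2 ∈ S \ {r})
    (hr1 : reachIn T (S \ {r}) c1 x) (hr2 : reachIn T (S \ {r}) c2 x) : False := by
  obtain ⟨w1, hw1⟩ := reachIn_walk T hc1 hr1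
  obtain ⟨w2, hw2⟩ := reachIn_walk T hc2 hr2
  have hb1 : r ∉ w1.bypass.support := fun h =>
    (hw1 r (w1.support_bypass_subset h)).2 rfl
  have hb2 : r ∉ w2.bypass.support := fun h =>
    (hw2 r (w2.support_bypass_subset h)).2 rfl
  have q1 : T.Walk r x := SimpleGraph.Walk.cons h1 w1.bypass
  have q2 : T.Walk r x := SimpleGraph.Walk.cons h2 w2.bypass
  have hq1 : (SimpleGraph.Walk.cons h1 w1.bypass).IsPath :=
    (w1.bypass_isPath).cons hb1
  have hq2 : (SimpleGraph.Walk.cons h2 w2.bypass).IsPath :=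
    (w2.bypass_isPath).cons hb2
  have := hacy.path_unique ⟨SimpleGraph.Walk.cons h1 w1.bypass, hq1⟩
      ⟨SimpleGraph.Walk.cons h2 w2.bypass, hq2⟩
  have hval : (SimpleGraph.Walk.cons h1 w1.bypass) = (SimpleGraph.Walk.cons h2 w2.bypass) :=
    congrArg Subtype.val this
  have : (SimpleGraph.Walk.cons h1 w1.bypass).getVert 1 = (SimpleGraph.Walk.cons h2 w2.bypass).getVert 1 := by rw [hval]
  simp [SimpleGraph.Walk.getVert] at this
  exact hne this


/-- The component of child `c` when `r` is removed from `S`. -/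
def comp (S : Set V) (r c : V) : Set V := {s | reachIn T (S \ {r}) c s}

/-- `S` is a rooted subtree with root `r` and exactly one edge leaving, at `r`. -/
def Sub (S : Set V) (r : V) : Prop :=
  r ∈ S ∧ (∀ s ∈ S, reachIn T S r s) ∧
  (∀ s ∈ S, ∀ u, u ∉ S → T.Adj s u → s = r) ∧
  ∃ u, u ∉ S ∧ T.Adj r u ∧ ∀ w, T.Adj r w → w ∉ S → w = u

lemma exists_child {S : Set V} {r : V} (hreach : ∀ s ∈ S, reachIn T S r s)
    {s : V} (hs : s ∈ S) (hne : s ≠ r) :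
    ∃ c, T.Adj r c ∧ c ∈ S ∧ s ∈ comp T S r c := by
  have key : ∀ t : V, reachIn T S r t →
      t = r ∨ ∃ c, T.Adj r c ∧ c ∈ S ∧ t ∈ comp T S r c := by
    intro t ht
    induction ht with
    | refl => exact Or.inl rfl
    | @tail b t h1 h2 ih =>
      by_cases htr : t = r
      · exact Or.inl htr
      · right
        rcases ih with hbr | ⟨c, hc1, hc2, hc3⟩
        · subst hbr
          exact ⟨t, h2.1, h2.2.2, Relation.ReflTransGen.refl⟩
        · have hcr : c ≠ r := fun h => T.irrefl (h ▸ hc1)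
          have hb : b ∈ S \ {r} := reachIn_mem T hc3 ⟨hc2, hcr⟩
          exact ⟨c, hc1, hc2, Relation.ReflTransGen.tail hc3 ⟨h2.1, hb, ⟨h2.2.2, htr⟩⟩⟩
  rcases key s (hreach s hs) with rfl | h
  · exact absurd rfl hne
  · exact h

lemma comp_subset {S : Set V} {r c : V} (hcS : c ∈ S) (hcr : c ≠ r) :
    comp T S r c ⊆ S \ {r} := fun _x hx => reachIn_mem T hx ⟨hcS, hcr⟩

lemma sub_comp [DecidableEq V] (hacy : T.IsAcyclic) {S : Set V} {r c : V}
    (hout : ∀ s ∈ S, ∀ u, u ∉ S → T.Adj s u → s = r)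
    (hr : r ∈ S) (hc : T.Adj r c) (hcS : c ∈ S) :
    Sub T (comp T S r c) c := by
  have hcr : c ≠ r := fun h => T.irrefl (h ▸ hc)
  have hsub : comp T S r c ⊆ S \ {r} := comp_subset T hcS hcr
  have hcmem : c ∈ comp T S r c := Relation.ReflTransGen.refl
  have hreach : ∀ s ∈ comp T S r c, reachIn T (comp T S r c) c s := by
    intro s hs
    induction hs with
    | refl => exact Relation.ReflTransGen.refl
    | @tail b t h1 h2 ih =>
      exact Relation.ReflTransGen.tail ih
        ⟨h2.1, h1, Relation.ReflTransGen.tail h1 h2⟩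
  refine ⟨hcmem, hreach, ?_, ?_⟩
  · intro s hs u hu hadj
    have hsS := hsub hs
    by_contra hsc
    by_cases hur : u = r
    · subst hur
      exact comp_disjoint T hacy hc (hadj.symm) (fun h => hsc h.symm)
        ⟨hcS, hcr⟩ hsS hs Relation.ReflTransGen.refl
    · by_cases huS : u ∈ S
      · exact hu (Relation.ReflTransGen.tail hs ⟨hadj, hsS, ⟨huS, hur⟩⟩)
      · exact hsS.2 (hout s hsS.1 u huS hadj)
  · refine ⟨r, fun h => (hsub h).2 rfl, hc.symm, ?_⟩
    intro w hw hwc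
    by_contra hwr
    by_cases hwS : w ∈ S
    · exact hwc (Relation.ReflTransGen.tail hcmem ⟨hw, ⟨hcS, hcr⟩, ⟨hwS, hwr⟩⟩)
    · exact hcr (hout c hcS w hwS hw)

lemma sub_leaf_singleton {S : Set V} {r : V} (hsub : Sub T S r)
    (hleaf : r ∈ leafSet T) : S = {r} := by
  obtain ⟨hrS, hreach, hout, u, huS, hru, huniq⟩ := hsub
  obtain ⟨a, ha⟩ := Set.ncard_eq_one.mp hleaf
  apply Set.eq_singleton_iff_unique_mem.mpr
  refine ⟨hrS, ?_⟩
  intro s hs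
  by_contra hne
  obtain ⟨c, hc1, hc2, _⟩ := exists_child T hreach hs hne
  have h1 : c ∈ T.neighborSet r := hc1
  have h2 : u ∈ T.neighborSet r := hru
  rw [ha, Set.mem_singleton_iff] at h1 h2
  exact huS ((h1.trans h2.symm) ▸ hc2)

lemma sub_two_children (hnd : ∀ v : V, (T.neighborSet v).ncard ≠ 2)
    {S : Set V} {r : V} (hfin : (T.neighborSet r).Finite) (hsub : Sub T S r)
    (hnl : r ∉ leafSet T) :
    ∃ c1 c2, c1 ≠ c2 ∧ T.Adj r c1 ∧ T.Adj r c2 ∧ c1 ∈ S ∧ c2 ∈ S := by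
  obtain ⟨hrS, hreach, hout, u, huS, hru, huniq⟩ := hsub
  have hsubn : T.neighborSet r ⊆ (T.neighborSet r ∩ S) ∪ {u} := by
    intro x hx
    by_cases hxS : x ∈ S
    · exact Or.inl ⟨hx, hxS⟩
    · exact Or.inr (huniq x hx hxS)
  have h3 : 3 ≤ (T.neighborSet r).ncard := by
    have h0 : (T.neighborSet r).ncard ≠ 0 := by
      intro h
      rw [Set.ncard_eq_zero hfin] at h
      exact (Set.eq_empty_iff_forall_notMem.mp h u) hru
    have h1 : (T.neighborSet r).ncard ≠ 1 := hnl
    have h2 := hnd r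
    omega
  have hle : (T.neighborSet r).ncard ≤ (T.neighborSet r ∩ S).ncard + 1 := by
    calc (T.neighborSet r).ncard ≤ ((T.neighborSet r ∩ S) ∪ {u}).ncard :=
          Set.ncard_le_ncard hsubn ((hfin.inter_of_left S).union (Set.finite_singleton u))
    _ ≤ (T.neighborSet r ∩ S).ncard + ({u} : Set V).ncard := Set.ncard_union_le _ _
    _ = (T.neighborSet r ∩ S).ncard + 1 := by rw [Set.ncard_singleton]
  have h2 : 1 < (T.neighborSet r ∩ S).ncard := by omega
  obtain ⟨a, b, ha, hb, hab⟩ := (Set.one_lt_ncard_iff (hfin.inter_of_left S)).mp h2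
  exact ⟨a, b, hab, ha.1, hb.1, ha.2, hb.2⟩

def Good (p : List V) : Prop :=
  UPath T p ∧ (∀ a : V, p = [a] → a ∈ leafSet T) ∧
  (2 ≤ p.length → MeetsLeavesExactlyAtEnds T p)

def PartGood (S : Set V) (P : Set (List V)) : Prop :=
  (∀ p ∈ P, Good T p) ∧ (∀ p ∈ P, ∀ v ∈ p, v ∈ S) ∧
  (∀ v ∈ S, ∃ p ∈ P, v ∈ p) ∧
  (∀ p ∈ P, ∀ q ∈ P, p ≠ q → ∀ v, v ∈ p → v ∉ q)

def DangAt (S : Set V) (r : V) (p : List V) : Prop :=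
  p.head? = some r ∧ UPath T p ∧ (∀ v ∈ p, v ∈ S) ∧
  ∃ b, p.getLast? = some b ∧ b ∈ leafSet T ∧ ∀ v ∈ p, v ∈ leafSet T → v = b

lemma partGood_empty : PartGood T ∅ ∅ := by
  refine ⟨?_, ?_, ?_, ?_⟩ <;> simp

lemma partGood_glue {ι : Type*} (C : Set ι) (A : ι → Set V) (P : ι → Set (List V))
    (h : ∀ i ∈ C, PartGood T (A i) (P i))
    (hdisj : ∀ i ∈ C, ∀ j ∈ C, i ≠ j → ∀ v, v ∈ A i → v ∉ A j) :
    PartGood T (⋃ i ∈ C, A i) (⋃ i ∈ C, P i) := by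
  refine ⟨?_, ?_, ?_, ?_⟩
  · intro p hp
    obtain ⟨i, hi, hpi⟩ := Set.mem_iUnion₂.mp hp
    exact (h i hi).1 p hpi
  · intro p hp v hv
    obtain ⟨i, hi, hpi⟩ := Set.mem_iUnion₂.mp hp
    exact Set.mem_iUnion₂.mpr ⟨i, hi, (h i hi).2.1 p hpi v hv⟩
  · intro v hv
    obtain ⟨i, hi, hvi⟩ := Set.mem_iUnion₂.mp hv
    obtain ⟨p, hp, hvp⟩ := (h i hi).2.2.1 v hvi
    exact ⟨p, Set.mem_iUnion₂.mpr ⟨i, hi, hp⟩, hvp⟩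
  · intro p hp q hq hpq v hvp hvq
    obtain ⟨i, hi, hpi⟩ := Set.mem_iUnion₂.mp hp
    obtain ⟨j, hj, hqj⟩ := Set.mem_iUnion₂.mp hq
    have hvi : v ∈ A i := (h i hi).2.1 p hpi v hvp
    have hvj : v ∈ A j := (h j hj).2.1 q hqj v hvq
    by_cases hij : i = j
    · subst hij
      exact (h i hi).2.2.2 p hpi q hqj hpq v hvp hvq
    · exact hdisj i hi j hj hij v hvi hvj

lemma partGood_add {B : Set V} {Q : Set (List V)} {m : List V}
    (h : PartGood T B Q) (hm : Good T m) (hdisj : ∀ v, v ∈ m → v ∉ B) :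
    PartGood T ({v | v ∈ m} ∪ B) (insert m Q) := by
  refine ⟨?_, ?_, ?_, ?_⟩
  · rintro p (rfl | hp)
    · exact hm
    · exact h.1 p hp
  · rintro p (rfl | hp) v hv
    · exact Or.inl hv
    · exact Or.inr (h.2.1 p hp v hv)
  · rintro v (hv | hv)
    · exact ⟨m, Or.inl rfl, hv⟩
    · obtain ⟨p, hp, hvp⟩ := h.2.2.1 v hv
      exact ⟨p, Or.inr hp, hvp⟩
  · rintro p (rfl | hp) q (rfl | hq) hpq v hvp hvq
    · exact hpq rfl
    · exact hdisj v hvp (h.2.1 q hq v hvq)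
    · exact hdisj v hvq (h.2.1 p hp v hvp)
    · exact h.2.2.2 p hp q hq hpq v hvp hvq

lemma partGood_congr {A B : Set V} {P : Set (List V)} (h : PartGood T A P)
    (hAB : A = B) : PartGood T B P := hAB ▸ h

lemma upath_singleton (a : V) : UPath T [a] :=
  ⟨List.cons_ne_nil a [], List.nodup_singleton a, List.isChain_singleton a⟩

lemma dang_cons {S' S : Set V} {r c : V} {p : List V} (hd : DangAt T S' c p)
    (hadj : T.Adj r c) (hrS : r ∈ S) (hS' : S' ⊆ S) (hrl : r ∉ leafSet T)
    (hr' : r ∉ S') : DangAt T S r (r :: p) := by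
  obtain ⟨hh, ⟨hne, hnd, hch⟩, hsub, b, hb1, hb2, hb3⟩ := hd
  refine ⟨rfl, ⟨List.cons_ne_nil r p, ?_, ?_⟩, ?_, b, ?_, hb2, ?_⟩
  · exact List.nodup_cons.mpr ⟨fun h => hr' (hsub r h), hnd⟩
  · refine List.isChain_cons.mpr ⟨?_, hch⟩
    intro y hy
    rw [hh, Option.mem_some_iff] at hy
    exact hy ▸ hadj
  · intro v hv
    rcases List.mem_cons.mp hv with rfl | hv
    · exact hrS
    · exact hS' (hsub v hv)
  · rw [show r :: p = [r] ++ p from rfl, List.getLast?_append, hb1]; rfl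
  · intro v hv hvl
    rcases List.mem_cons.mp hv with rfl | hv
    · exact absurd hvl hrl
    · exact hb3 v hv hvl

lemma dang_merge {S1 S2 : Set V} {r c1 c2 : V} {p1 p2 : List V}
    (h1 : DangAt T S1 c1 p1) (h2 : DangAt T S2 c2 p2)
    (ha1 : T.Adj r c1) (ha2 : T.Adj r c2)
    (hdisj : ∀ v ∈ S1, v ∉ S2) (hr1 : r ∉ S1) (hr2 : r ∉ S2)
    (hrl : r ∉ leafSet T) : Good T (p1.reverse ++ r :: p2) := by
  obtain ⟨hh1, ⟨hne1, hnd1, hch1⟩, hsub1, b1, hb11, hb12, hb13⟩ := h1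
  obtain ⟨hh2, ⟨hne2, hnd2, hch2⟩, hsub2, b2, hb21, hb22, hb23⟩ := h2
  have hmem : ∀ v, v ∈ p1.reverse ++ r :: p2 ↔ (v ∈ p1 ∨ v = r ∨ v ∈ p2) := by
    intro v; simp [List.mem_append, List.mem_reverse, List.mem_cons]
  refine ⟨⟨?_, ?_, ?_⟩, ?_, ?_⟩
  · simp [hne2]
  · refine List.nodup_append.mpr ⟨List.nodup_reverse.mpr hnd1, ?_, ?_⟩
    · exact List.nodup_cons.mpr ⟨fun h => hr2 (hsub2 r h), hnd2⟩
    · intro a ha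
      have haS : a ∈ S1 := hsub1 a (List.mem_reverse.mp ha)
      intro b hmem2 hab; subst hab
      rcases List.mem_cons.mp hmem2 with rfl | hap2
      · exact hr1 haS
      · exact hdisj a haS (hsub2 a hap2)
  · refine List.isChain_append.mpr ⟨?_, ?_, ?_⟩
    · exact List.isChain_reverse.mpr (hch1.imp fun a b h => h.symm)
    · refine List.isChain_cons.mpr ⟨?_, hch2⟩
      intro y hy
      rw [hh2, Option.mem_some_iff] at hy
      exact hy ▸ ha2
    · intro x hx y hy
      simp only [List.getLast?_reverse, hh1, List.head?_cons, Option.mem_some_iff] at hx hy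
      rw [← hx, ← hy]
      exact ha1.symm
  · intro a ha
    exfalso
    have h3 : b1 ∈ p1 := List.mem_of_mem_getLast? (hb11 ▸ rfl)
    have h4 : b1 ∈ [a] := ha ▸ (hmem b1).mpr (Or.inl h3)
    have h5 : r ∈ [a] := ha ▸ (hmem r).mpr (Or.inr (Or.inl rfl))
    rw [List.mem_singleton] at h4 h5
    exact hr1 ((h5.trans h4.symm) ▸ hsub1 b1 h3)
  · intro _
    refine ⟨b1, b2, ?_, ?_, ?_, hb12, hb22, ?_⟩
    · rw [List.head?_append, List.head?_reverse, hb11]; rfl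
    · rw [List.getLast?_append, show (r :: p2).getLast? = p2.getLast? from ?_, hb21]
      · rfl
      · rw [show r :: p2 = [r] ++ p2 from rfl, List.getLast?_append]
        cases hp2 : p2.getLast? with
        | none => rw [hp2] at hb21; exact absurd hb21 (by simp)
        | some x => rfl
    · intro h
      subst h
      exact hdisj b1 (hsub1 b1 (List.mem_of_mem_getLast? (hb11 ▸ rfl)))
        (hsub2 b1 (List.mem_of_mem_getLast? (hb21 ▸ rfl)))
    · intro v hv hvl
      rcases (hmem v).mp hv with h | h | h
      · exact Or.inl (hb13 v h hvl)
      · exact absurd hvl (h ▸ hrl)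
      · exact Or.inr (hb23 v h hvl)

theorem key [Fintype V] [DecidableEq V] (hacy : T.IsAcyclic)
    (hnd : ∀ v : V, (T.neighborSet v).ncard ≠ 2) :
    ∀ n : ℕ, ∀ S : Set V, ∀ r : V, S.ncard ≤ n → Sub T S r →
      (∃ (p : List V) (P : Set (List V)), DangAt T S r p ∧
        PartGood T (S \ {v | v ∈ p}) P) ∧
      (∃ P : Set (List V), PartGood T S P) := by
  intro n
  induction n with
  | zero =>
    intro S r hn hsub
    exfalso
    have hse : S = ∅ := (Set.ncard_eq_zero (Set.toFinite S)).mp (Nat.le_zero.mp hn)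
    exact absurd (hse ▸ hsub.1) (Set.notMem_empty r)
  | succ n ih =>
    intro S r hn hsub
    by_cases hleaf : r ∈ leafSet T
    · -- r is a leaf: S = {r}
      have hS : S = {r} := sub_leaf_singleton T hsub hleaf
      constructor
      · refine ⟨[r], ∅, ⟨rfl, upath_singleton T r, ?_, r, rfl, hleaf, ?_⟩, ?_⟩
        · intro v hv; rw [List.mem_singleton] at hv; subst hv; exact hsub.1
        · intro v hv _; exact List.mem_singleton.mp hv
        · have he : S \ {v | v ∈ [r]} = ∅ := by
            rw [hS]; ext x; simp
          rw [he]; exact partGood_empty T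
      · refine ⟨{[r]}, ?_, ?_, ?_, ?_⟩
        · intro p hp
          rw [Set.mem_singleton_iff] at hp; subst hp
          refine ⟨upath_singleton T r, ?_, ?_⟩
          · intro a ha
            have : r = a := by simpa using ha
            exact this ▸ hleaf
          · intro h; simp at h
        · intro p hp v hv
          rw [Set.mem_singleton_iff] at hp; subst hp
          rw [hS]
          simpa using List.mem_singleton.mp hv
        · intro v hv
          rw [hS, Set.mem_singleton_iff] at hv
          exact ⟨[r], rfl, by rw [hv]; exact List.mem_singleton.mpr rfl⟩
        · intro p hp q hq hpq
          rw [Set.mem_singleton_iff] at hp hq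
          exact absurd (hp.trans hq.symm) hpq
    · -- r is internal
      obtain ⟨c1, c2, hc12, ha1, ha2, hm1, hm2⟩ :=
        sub_two_children T hnd (Set.toFinite _) hsub hleaf
      have hrS := hsub.1
      have hreach := hsub.2.1
      have hout := hsub.2.2.1
      have hcompsub : ∀ c, T.Adj r c → c ∈ S → comp T S r c ⊆ S \ {r} :=
        fun c hc hcS => comp_subset T hcS (fun h => T.irrefl (h ▸ hc))
      have hsubc : ∀ c, T.Adj r c → c ∈ S → Sub T (comp T S r c) c :=
        fun c hc hcS => sub_comp T hacy hout hrS hc hcS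
      have hcard : ∀ c, T.Adj r c → c ∈ S → (comp T S r c).ncard ≤ n := by
        intro c hc hcS
        have hss : comp T S r c ⊂ S :=
          (Set.ssubset_iff_of_subset (fun x hx => ((hcompsub c hc hcS) hx).1)).mpr
            ⟨r, hrS, fun h => ((hcompsub c hc hcS) h).2 rfl⟩
        have := Set.ncard_lt_ncard hss (Set.toFinite S)
        omega
      have hC1 : c1 ∈ {c | T.Adj r c ∧ c ∈ S} := ⟨ha1, hm1⟩
      have hC2 : c2 ∈ {c | T.Adj r c ∧ c ∈ S} := ⟨ha2, hm2⟩
      set C : Set V := {c | T.Adj r c ∧ c ∈ S} with hCdef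
      have hcd : ∀ c ∈ C, ∀ d ∈ C, c ≠ d → ∀ v, v ∈ comp T S r c → v ∉ comp T S r d := by
        intro c hc d hd hne v hvc hvd
        exact comp_disjoint T hacy hc.1 hd.1 hne
          ⟨hc.2, fun h => T.irrefl (h ▸ hc.1)⟩
          ⟨hd.2, fun h => T.irrefl (h ▸ hd.1)⟩ hvc hvd
      have hcover : ∀ s ∈ S, s ≠ r → ∃ c ∈ C, s ∈ comp T S r c := by
        intro s hs hne
        obtain ⟨c, h1, h2, h3⟩ := exists_child T hreach hs hne
        exact ⟨c, ⟨h1, h2⟩, h3⟩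
      have hex : ∀ c : V, ∃ (pc : List V) (Pc Qc : Set (List V)), c ∈ C →
          (DangAt T (comp T S r c) c pc ∧
            PartGood T ((comp T S r c) \ {v | v ∈ pc}) Pc) ∧
          PartGood T (comp T S r c) Qc := by
        intro c
        by_cases hc : c ∈ C
        · obtain ⟨⟨pc, Pc, h1⟩, Qc, h2⟩ :=
            ih (comp T S r c) c (hcard c hc.1 hc.2) (hsubc c hc.1 hc.2)
          exact ⟨pc, Pc, Qc, fun _ => ⟨h1, h2⟩⟩
        · exact ⟨[], ∅, ∅, fun h => absurd h hc⟩
      choose pf Pf Qf hf using hex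
      have hp1sub : ∀ v ∈ pf c1, v ∈ comp T S r c1 := ((hf c1 hC1).1.1).2.2.1
      have hp2sub : ∀ v ∈ pf c2, v ∈ comp T S r c2 := ((hf c2 hC2).1.1).2.2.1
      have hrnc : ∀ c ∈ C, r ∉ comp T S r c :=
        fun c hc h => ((hcompsub c hc.1 hc.2) h).2 rfl
      constructor
      · -- dangling conclusion: path r :: pf c1
        refine ⟨r :: pf c1,
          ⋃ c ∈ C, (if c = c1 then Pf c1 else Qf c), ?_, ?_⟩
        · exact dang_cons T (hf c1 hC1).1.1 ha1 hrS
            (fun x hx => ((hcompsub c1 ha1 hm1) hx).1) hleaf (hrnc c1 hC1)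
        · refine partGood_congr T (partGood_glue T C
            (fun c => if c = c1 then comp T S r c1 \ {v | v ∈ pf c1} else comp T S r c)
            (fun c => if c = c1 then Pf c1 else Qf c) ?_ ?_) ?_
          · intro c hc
            by_cases hcc : c = c1
            · subst hcc; simp only [if_pos rfl]
              exact (hf c hc).1.2
            · simp only [if_neg hcc]
              exact (hf c hc).2
          · intro c hc d hd hne v hv hv'
            have hvc : v ∈ comp T S r c := by
              by_cases hcc : c = c1
              · subst hcc; simp only [if_pos] at hv; exact hv.1
              · simp only [if_neg hcc] at hv; exact hv
            have hvd : v ∈ comp T S r d := by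
              by_cases hdd : d = c1
              · subst hdd; simp only [if_pos] at hv'; exact hv'.1
              · simp only [if_neg hdd] at hv'; exact hv'
            exact hcd c hc d hd hne v hvc hvd
          · ext x
            simp only [Set.mem_iUnion, Set.mem_diff, Set.mem_setOf_eq, List.mem_cons]
            constructor
            · rintro ⟨c, hc, hx⟩
              by_cases hcc : c = c1
              · subst hcc; simp only [if_pos] at hx
                refine ⟨((hcompsub c ha1 hm1) hx.1).1, ?_⟩
                rintro (rfl | hxp)
                · exact ((hcompsub c ha1 hm1) hx.1).2 rfl
                · exact hx.2 hxp
              · simp only [if_neg hcc] at hx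
                refine ⟨((hcompsub c hc.1 hc.2) hx).1, ?_⟩
                rintro (rfl | hxp)
                · exact ((hcompsub c hc.1 hc.2) hx).2 rfl
                · exact hcd c hc c1 hC1 hcc x hx (hp1sub x hxp)
            · rintro ⟨hxS, hxn⟩
              push_neg at hxn
              obtain ⟨c, hc, hxc⟩ := hcover x hxS hxn.1
              refine ⟨c, hc, ?_⟩
              by_cases hcc : c = c1
              · subst hcc; simp only [if_pos]; exact ⟨hxc, hxn.2⟩
              · simp only [if_neg hcc]; exact hxc
      · -- complete partition conclusion
        have hGood : Good T ((pf c1).reverse ++ r :: pf c2) :=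
          dang_merge T (hf c1 hC1).1.1 (hf c2 hC2).1.1 ha1 ha2
            (fun v hv => hcd c1 hC1 c2 hC2 hc12 v hv)
            (hrnc c1 hC1) (hrnc c2 hC2) hleaf
        have hmemm : ∀ v, v ∈ (pf c1).reverse ++ r :: pf c2 ↔
            (v ∈ pf c1 ∨ v = r ∨ v ∈ pf c2) := by
          intro v; simp [List.mem_append, List.mem_reverse, List.mem_cons]
        refine ⟨insert ((pf c1).reverse ++ r :: pf c2)
          (⋃ c ∈ C, (if c = c1 then Pf c1 else if c = c2 then Pf c2 else Qf c)), ?_⟩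
        have hAc : ∀ c ∈ C, ∀ v, v ∈ (if c = c1 then comp T S r c1 \ {v | v ∈ pf c1}
            else if c = c2 then comp T S r c2 \ {v | v ∈ pf c2} else comp T S r c) →
            v ∈ comp T S r c := by
          intro c hc v hv
          by_cases h1 : c = c1
          · subst h1; simp only [if_pos] at hv; exact hv.1
          · simp only [if_neg h1] at hv
            by_cases h2 : c = c2
            · subst h2; simp only [if_pos] at hv; exact hv.1
            · simp only [if_neg h2] at hv; exact hv
        have hglue := partGood_glue T C
          (fun c => if c = c1 then comp T S r c1 \ {v | v ∈ pf c1}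
            else if c = c2 then comp T S r c2 \ {v | v ∈ pf c2} else comp T S r c)
          (fun c => if c = c1 then Pf c1 else if c = c2 then Pf c2 else Qf c)
          (by
            intro c hc
            by_cases h1 : c = c1
            · subst h1; simp only [if_pos rfl]; exact (hf c hc).1.2
            · simp only [if_neg h1]
              by_cases h2 : c = c2
              · subst h2; simp only [if_pos rfl]; exact (hf c hc).1.2
              · simp only [if_neg h2]; exact (hf c hc).2)
          (by
            intro c hc d hd hne v hv hv'
            exact hcd c hc d hd hne v (hAc c hc v hv) (hAc d hd v hv'))
        have hdisjm : ∀ v, v ∈ (pf c1).reverse ++ r :: pf c2 →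
            v ∉ ⋃ c ∈ C, (if c = c1 then comp T S r c1 \ {v | v ∈ pf c1}
              else if c = c2 then comp T S r c2 \ {v | v ∈ pf c2} else comp T S r c) := by
          intro v hv hvB
          obtain ⟨c, hc, hvc⟩ := Set.mem_iUnion₂.mp hvB
          have hvcomp := hAc c hc v hvc
          rcases (hmemm v).mp hv with h | h | h
          · by_cases hcc : c = c1
            · subst hcc; simp only [if_pos] at hvc; exact hvc.2 h
            · exact hcd c hc c1 hC1 hcc v hvcomp (hp1sub v h)
          · exact hrnc c hc (h ▸ hvcomp)
          · by_cases hcc : c = c2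
            · subst hcc
              simp only [if_neg (show ¬ c = c1 from fun h => hc12 h.symm), if_pos] at hvc
              exact hvc.2 h
            · exact hcd c hc c2 hC2 hcc v hvcomp (hp2sub v h)
        refine partGood_congr T (partGood_add T hglue hGood hdisjm) ?_
        ext x
        simp only [Set.mem_union, Set.mem_setOf_eq]
        constructor
        · rintro (hx | hx)
          · rcases (hmemm x).mp hx with h | h | h
            · exact ((hcompsub c1 ha1 hm1) (hp1sub x h)).1
            · exact h ▸ hrS
            · exact ((hcompsub c2 ha2 hm2) (hp2sub x h)).1
          · obtain ⟨c, hc, hxc⟩ := Set.mem_iUnion₂.mp hx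
            exact ((hcompsub c hc.1 hc.2) (hAc c hc x hxc)).1
        · intro hxS
          by_cases hxr : x = r
          · exact Or.inl ((hmemm x).mpr (Or.inr (Or.inl hxr)))
          · obtain ⟨c, hc, hxc⟩ := hcover x hxS hxr
            by_cases h1 : c = c1
            · subst h1
              by_cases hxp : x ∈ pf c
              · exact Or.inl ((hmemm x).mpr (Or.inl hxp))
              · refine Or.inr (Set.mem_iUnion₂.mpr ⟨c, hC1, ?_⟩)
                simp only [if_pos]; exact ⟨hxc, hxp⟩
            · by_cases h2 : c = c2
              · subst h2
                by_cases hxp : x ∈ pf c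
                · exact Or.inl ((hmemm x).mpr (Or.inr (Or.inr hxp)))
                · refine Or.inr (Set.mem_iUnion₂.mpr ⟨c, hC2, ?_⟩)
                  simp only [if_neg h1, if_pos]; exact ⟨hxc, hxp⟩
              · refine Or.inr (Set.mem_iUnion₂.mpr ⟨c, hc, ?_⟩)
                simp only [if_neg h1, if_neg h2]; exact hxc

lemma walk_reachIn {u v : V} (p : T.Walk u v) : reachIn T Set.univ u v := by
  induction p with
  | nil => exact Relation.ReflTransGen.refl
  | cons h _ ih => exact Relation.ReflTransGen.head ⟨h, trivial, trivial⟩ ih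

lemma exists_leaf [Fintype V] (hcard : 1 < Fintype.card V)
    (hconn : T.Connected) (hacy : T.IsAcyclic) : ∃ v, v ∈ leafSet T := by
  classical
  by_contra hno
  push_neg at hno
  have hdegeq : ∀ v : V, (T.neighborSet v).ncard = T.degree v := by
    intro v
    rw [Set.ncard_eq_toFinset_card']
    congr 1
  have hdeg2 : ∀ v : V, 2 ≤ T.degree v := by
    intro v
    have h1 : 0 < T.degree v := by
      rw [SimpleGraph.degree_pos_iff_exists_adj]
      obtain ⟨w, hw⟩ := Fintype.exists_ne_of_one_lt_card hcard v
      obtain ⟨p⟩ := hconn.preconnected v w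
      cases p with
      | nil => exact absurd rfl hw
      | cons h _ => exact ⟨_, h⟩
    have h2 := hno v
    rw [leafSet, Set.mem_setOf_eq, hdegeq v] at h2
    omega
  have hsum := T.sum_degrees_eq_twice_card_edges
  have htree : T.IsTree := ⟨hconn, hacy⟩
  have hcnt := htree.card_edgeFinset
  have hge : 2 * Fintype.card V ≤ ∑ v : V, T.degree v := by
    calc 2 * Fintype.card V = ∑ _v : V, 2 := by
          rw [Finset.sum_const, Finset.card_univ, smul_eq_mul, mul_comm]
    _ ≤ ∑ v, T.degree v := Finset.sum_le_sum (fun v _ => hdeg2 v)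
  omega

theorem main [Fintype V] (hcard : 1 < Fintype.card V)
    (hconn : T.Connected) (hacy : T.IsAcyclic)
    (hnodeg2 : ∀ v : V, (T.neighborSet v).ncard ≠ 2) :
    ∃ P : Set (List V),
      (∀ p ∈ P, UPath T p) ∧
      (∀ v : V, ∃! p, p ∈ P ∧ v ∈ p) ∧
      ∀ p ∈ P,
        (∀ a : V, p = [a] → a ∈ leafSet T) ∧
        (2 ≤ p.length → MeetsLeavesExactlyAtEnds T p) := by
  classical
  obtain ⟨ρ, hρ⟩ := exists_leaf T hcard hconn hacy
  obtain ⟨c, hc⟩ := Set.ncard_eq_one.mp hρ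
  have hadj : T.Adj ρ c := by
    have : c ∈ T.neighborSet ρ := by rw [hc]; rfl
    exact this
  have hsubc : Sub T (comp T Set.univ ρ c) c :=
    sub_comp T hacy (fun s _ u hu _ => absurd (Set.mem_univ u) hu)
      (Set.mem_univ ρ) hadj (Set.mem_univ c)
  have hcompsub : comp T Set.univ ρ c ⊆ Set.univ \ {ρ} :=
    comp_subset T (Set.mem_univ c) (fun h => T.irrefl (h ▸ hadj))
  have hρnotin : ρ ∉ comp T Set.univ ρ c := fun h => (hcompsub h).2 rfl
  have hcover : ∀ v : V, v ≠ ρ → v ∈ comp T Set.univ ρ c := by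
    intro v hv
    obtain ⟨c', h1, _h2, h3⟩ := exists_child T
      (fun s _ => walk_reachIn T (hconn.preconnected ρ s).some) (Set.mem_univ v) hv
    have hcc : c' ∈ T.neighborSet ρ := h1
    rw [hc, Set.mem_singleton_iff] at hcc
    rw [hcc] at h3
    exact h3
  obtain ⟨⟨p1, P1, hD, hP1⟩, -⟩ := key T hacy hnodeg2
    ((comp T Set.univ ρ c).ncard) (comp T Set.univ ρ c) c le_rfl hsubc
  obtain ⟨hh1, ⟨hne1, hnd1, hch1⟩, hsub1, b, hb1, hb2, hb3⟩ := hD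
  have hgl : (ρ :: p1).getLast? = some b := by
    rw [show ρ :: p1 = [ρ] ++ p1 from rfl, List.getLast?_append, hb1]; rfl
  have hbmem : b ∈ p1 := List.mem_of_mem_getLast? (hb1 ▸ rfl)
  have hP1sub : ∀ q ∈ P1, ∀ v ∈ q, v ∈ comp T Set.univ ρ c \ {v | v ∈ p1} := hP1.2.1
  have hup : UPath T (ρ :: p1) := by
    refine ⟨List.cons_ne_nil ρ p1, ?_, ?_⟩
    · exact List.nodup_cons.mpr ⟨fun h => hρnotin (hsub1 ρ h), hnd1⟩
    · refine List.isChain_cons.mpr ⟨?_, hch1⟩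
      intro y hy
      rw [hh1, Option.mem_some_iff] at hy
      exact hy ▸ hadj
  refine ⟨insert (ρ :: p1) P1, ?_, ?_, ?_⟩
  · rintro p (rfl | hp)
    · exact hup
    · exact (hP1.1 p hp).1
  · intro v
    by_cases hvm : v ∈ ρ :: p1
    · refine ⟨ρ :: p1, ⟨Or.inl rfl, hvm⟩, ?_⟩
      rintro q ⟨(rfl | hq), hvq⟩
      · rfl
      · exfalso
        have h1 := hP1sub q hq v hvq
        rcases List.mem_cons.mp hvm with rfl | hvp
        · exact hρnotin h1.1
        · exact h1.2 hvp
    · have hvρ : v ≠ ρ := fun h => hvm (h ▸ List.mem_cons_self (a := ρ) (l := p1))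
      have hvp1 : v ∉ p1 := fun h => hvm (List.mem_cons_of_mem ρ h)
      have hvc : v ∈ comp T Set.univ ρ c \ {x | x ∈ p1} := ⟨hcover v hvρ, hvp1⟩
      obtain ⟨q, hq, hvq⟩ := hP1.2.2.1 v hvc
      refine ⟨q, ⟨Or.inr hq, hvq⟩, ?_⟩
      rintro q' ⟨(rfl | hq'), hvq'⟩
      · exact absurd hvq' hvm
      · by_contra hne
        exact hP1.2.2.2 q' hq' q hq hne v hvq' hvq
  · rintro p (rfl | hp)
    · constructor
      · intro a ha
        exfalso
        have := congrArg List.length ha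
        simp at this
        exact hne1 this
      · intro _
        refine ⟨ρ, b, rfl, hgl, ?_, hρ, hb2, ?_⟩
        · intro h
          exact hρnotin (h ▸ hsub1 b hbmem)
        · intro v hv hvl
          rcases List.mem_cons.mp hv with rfl | hv
          · exact Or.inl rfl
          · exact Or.inr (hb3 v hv hvl)
    · exact ⟨(hP1.1 p hp).2.1, (hP1.1 p hp).2.2⟩


/-- Every unrooted phylogenetic tree admits a leaf induced
path partition: if `T` is a tree (connected and acyclic) with at least two
vertices, no vertex of degree 2, and leaf set `L(T)`, then the vertex set of
`T` can be partitioned into vertex-disjoint paths of `T` such that every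
single-vertex path of the collection is contained in `L(T)` and every other
path intersects `L(T)` precisely in its two end vertices. -/
theorem phylogeneticTree_leafIPP
    {V : Type*} [Fintype V] (T : SimpleGraph V)
    (hcard : 1 < Fintype.card V)
    (hconn : T.Connected) (hacy : T.IsAcyclic)
    (hnodeg2 : ∀ v : V, (T.neighborSet v).ncard ≠ 2) :
    ∃ P : Set (List V),
      (∀ p ∈ P, UPath T p) ∧
      (∀ v : V, ∃! p, p ∈ P ∧ v ∈ p) ∧
      ∀ p ∈ P,
        (∀ a : V, p = [a] → a ∈ leafSet T) ∧
        (2 ≤ p.length → MeetsLeavesExactlyAtEnds T p) := by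
  exact main T hcard hconn hacy hnodeg2

end Paper
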